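/- Every positive logic P is the positive fragment of a superintuitionistic logic; moreover Int + P is the least superintuitionistic logic whose positive fragment is P, i.e., P = (Int + P) ∩ Frm⁺ and any superintuitionistic logic L with L ∩ Frm⁺ = P satisfies Int + P ⊆ L. -/

import Mathlib

/-- Propositional formulas over ∧, ∨, →, ⊥ and variables. -/
inductive Fml : Type
  | var : ℕ → Fml
  | bot : Fml
  | and : Fml → Fml → Fml
  | or  : Fml → Fml → Fml
  | imp : Fml → Fml → Fml

namespace Fml

/-- A formula is positive if it contains no ⊥. -/
def Positive : Fml → Prop
  | var _ => True
  | bot => False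
  | and A B => A.Positive ∧ B.Positive
  | or A B => A.Positive ∧ B.Positive
  | imp A B => A.Positive ∧ B.Positive

/-- Evaluation in a Brouwerian (generalized Heyting) algebra, with a designated
value `z` interpreting ⊥. -/
def evalB {α : Type} [GeneralizedHeytingAlgebra α] (z : α) (ν : ℕ → α) : Fml → α
  | var n => ν n
  | bot => z
  | and A B => A.evalB z ν ⊓ B.evalB z ν
  | or A B => A.evalB z ν ⊔ B.evalB z ν
  | imp A B => A.evalB z ν ⇨ B.evalB z ν

/-- Evaluation in a Heyting algebra (⊥ interpreted as the least element). -/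
def eval {α : Type} [HeytingAlgebra α] (ν : ℕ → α) (A : Fml) : α := A.evalB ⊥ ν

/-- Evaluation of (positive) formulas in a Brouwerian algebra
(⊥ gets the junk value ⊤; it is irrelevant for positive formulas). -/
def pEval {α : Type} [GeneralizedHeytingAlgebra α] (ν : ℕ → α) (A : Fml) : α := A.evalB ⊤ ν

/-- Substitution. -/
def subst (σ : ℕ → Fml) : Fml → Fml
  | var n => σ n
  | bot => bot
  | and A B => and (A.subst σ) (B.subst σ)
  | or A B => or (A.subst σ) (B.subst σ)
  | imp A B => imp (A.subst σ) (B.subst σ)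

/-- Replacing every occurrence of ⊥ by the formula `C`. -/
def substBot : Fml → Fml → Fml
  | var n, _ => var n
  | bot, C => C
  | and A B, C => and (A.substBot C) (B.substBot C)
  | or A B, C => or (A.substBot C) (B.substBot C)
  | imp A B, C => imp (A.substBot C) (B.substBot C)

/-- The set of variables occurring in a formula. -/
def vars : Fml → Finset ℕ
  | var n => {n}
  | bot => ∅
  | and A B => A.vars ∪ B.vars
  | or A B => A.vars ∪ B.vars
  | imp A B => A.vars ∪ B.vars

end Fml

/-- The set of positive formulas. -/
def PosFml : Set Fml := {A | A.Positive}

/-- A substitution is positive if all its values are positive formulas. -/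
def PosSubst (σ : ℕ → Fml) : Prop := ∀ n, (σ n).Positive

/-- Validity of a formula in a Heyting algebra. -/
def ValidH (α : Type) [HeytingAlgebra α] (A : Fml) : Prop := ∀ ν : ℕ → α, A.eval ν = ⊤

/-- Intuitionistic propositional logic (via algebraic semantics). -/
def IntL : Set Fml := {A | ∀ (α : Type) [HeytingAlgebra α], ValidH α A}

/-- Superintuitionistic logics. -/
structure IsSILogic (L : Set Fml) : Prop where
  int_sub : IntL ⊆ L
  mp : ∀ A B : Fml, Fml.imp A B ∈ L → A ∈ L → B ∈ L
  subst_closed : ∀ A ∈ L, ∀ σ : ℕ → Fml, A.subst σ ∈ L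

/-- The least superintuitionistic logic containing `Γ`. -/
def IntPlus (Γ : Set Fml) : Set Fml := ⋂₀ {L | IsSILogic L ∧ Γ ⊆ L}

/-- The positive fragment of intuitionistic logic. -/
def IntLPos : Set Fml := IntL ∩ PosFml

/-- Positive logics. -/
structure IsPosLogic (P : Set Fml) : Prop where
  pos : P ⊆ PosFml
  int_sub : IntLPos ⊆ P
  mp : ∀ A B : Fml, Fml.imp A B ∈ P → A ∈ P → B ∈ P
  subst_closed : ∀ A ∈ P, ∀ σ : ℕ → Fml, PosSubst σ → A.subst σ ∈ P

/-- The least positive logic containing `Γ`. -/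
def IntPosPlus (Γ : Set Fml) : Set Fml := ⋂₀ {P | IsPosLogic P ∧ Γ ⊆ P}

/-- Homomorphism of Brouwerian algebras (preserves ⊓, ⊔, ⇨, ⊤). -/
def IsBrHom {α β : Type} [GeneralizedHeytingAlgebra α] [GeneralizedHeytingAlgebra β]
    (f : α → β) : Prop :=
  (∀ a b : α, f (a ⊓ b) = f a ⊓ f b) ∧ (∀ a b : α, f (a ⊔ b) = f a ⊔ f b) ∧
  (∀ a b : α, f (a ⇨ b) = f a ⇨ f b) ∧ f ⊤ = ⊤

/-- A Heyting algebra is a model of a set of formulas `T`. -/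
def Models (α : Type) [HeytingAlgebra α] (T : Set Fml) : Prop := ∀ A ∈ T, ValidH α A

/-- The variety (of Heyting algebras) axiomatized by `T` is B-saturated: any Heyting
algebra whose Brouwerian reduct embeds into the reduct of a model of `T` is itself
a model of `T`. -/
def BSaturated (T : Set Fml) : Prop :=
  ∀ (α : Type) (iα : HeytingAlgebra α),
    (∃ (β : Type) (iβ : HeytingAlgebra β), @Models β iβ T ∧
      ∃ f : α → β, Function.Injective f ∧
        @IsBrHom α β iα.toGeneralizedHeytingAlgebra iβ.toGeneralizedHeytingAlgebra f) →
    @Models α iα T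

/-- A subset of a Brouwerian algebra closed under the Brouwerian operations. -/
def BrClosed {α : Type} [GeneralizedHeytingAlgebra α] (S : Set α) : Prop :=
  ⊤ ∈ S ∧ ∀ a ∈ S, ∀ b ∈ S, a ⊓ b ∈ S ∧ a ⊔ b ∈ S ∧ (a ⇨ b) ∈ S

/-- The Brouwerian subalgebra generated by a set. -/
def genBr {α : Type} [GeneralizedHeytingAlgebra α] (s : Set α) : Set α :=
  ⋂₀ {S | BrClosed S ∧ s ⊆ S}

/-- Conjunction of a list of variables (nonempty case is the intended one). -/
def conjList : List ℕ → Fml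
  | [] => Fml.imp (Fml.var 0) (Fml.var 0)
  | [n] => Fml.var n
  | n :: l => Fml.and (Fml.var n) (conjList l)

/-- The conjunction π^∧ of all variables in a finite set π. -/
def conjOf (π : Finset ℕ) : Fml := conjList (π.sort (· ≤ ·))

/-- Multiple-conclusion rules. -/
def MRule : Type := Finset Fml × Finset Fml

/-- A rule is positive if all its premises and conclusions are positive. -/
def PosRule (r : MRule) : Prop := (∀ A ∈ r.1, A.Positive) ∧ (∀ B ∈ r.2, B.Positive)

/-- Validity of a (positive) m-rule in a Brouwerian algebra. -/
def RuleValid (α : Type) [GeneralizedHeytingAlgebra α] (r : MRule) : Prop :=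
  ∀ ν : ℕ → α, (∀ A ∈ r.1, A.pEval ν = ⊤) → ∃ B ∈ r.2, B.pEval ν = ⊤

/-- A Brouwerian algebra is a model of a set of positive formulas. -/
def ModelsP (β : Type) [GeneralizedHeytingAlgebra β] (P : Set Fml) : Prop :=
  ∀ A ∈ P, ∀ ν : ℕ → β, A.pEval ν = ⊤

/-- Filter of a Brouwerian (or Heyting) algebra. -/
def IsFilter' {α : Type} [GeneralizedHeytingAlgebra α] (F : Set α) : Prop :=
  ⊤ ∈ F ∧ ∀ a b : α, a ∈ F → (a ⇨ b) ∈ F → b ∈ F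

-- AUX lemmas
namespace Fml

lemma substBot_positive {C : Fml} (hC : C.Positive) : ∀ A : Fml, (A.substBot C).Positive := by
  intro A; induction A with
  | var n => trivial
  | bot => exact hC
  | and A B ihA ihB => exact ⟨ihA, ihB⟩
  | or A B ihA ihB => exact ⟨ihA, ihB⟩
  | imp A B ihA ihB => exact ⟨ihA, ihB⟩

lemma positive_substBot {C : Fml} : ∀ {A : Fml}, A.Positive → A.substBot C = A := by
  intro A; induction A with
  | var n => intro _; rfl
  | bot => intro h; exact absurd h id
  | and A B ihA ihB => intro h; simp [substBot, ihA h.1, ihB h.2]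
  | or A B ihA ihB => intro h; simp [substBot, ihA h.1, ihB h.2]
  | imp A B ihA ihB => intro h; simp [substBot, ihA h.1, ihB h.2]

lemma subst_positive {σ : ℕ → Fml} (hσ : ∀ n, (σ n).Positive) :
    ∀ {A : Fml}, A.Positive → (A.subst σ).Positive := by
  intro A; induction A with
  | var n => intro _; exact hσ n
  | bot => intro h; exact absurd h id
  | and A B ihA ihB => intro h; exact ⟨ihA h.1, ihB h.2⟩
  | or A B ihA ihB => intro h; exact ⟨ihA h.1, ihB h.2⟩
  | imp A B ihA ihB => intro h; exact ⟨ihA h.1, ihB h.2⟩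

lemma evalB_substBot {α : Type} [GeneralizedHeytingAlgebra α] (z : α) (ν : ℕ → α) (C : Fml) :
    ∀ A : Fml, (A.substBot C).evalB z ν = A.evalB (C.evalB z ν) ν := by
  intro A; induction A with
  | var n => rfl
  | bot => rfl
  | and A B ihA ihB => simp [substBot, evalB, ihA, ihB]
  | or A B ihA ihB => simp [substBot, evalB, ihA, ihB]
  | imp A B ihA ihB => simp [substBot, evalB, ihA, ihB]

lemma evalB_subst {α : Type} [GeneralizedHeytingAlgebra α] (z : α) (ν : ℕ → α) (σ : ℕ → Fml) :
    ∀ A : Fml, (A.subst σ).evalB z ν = A.evalB z (fun n => (σ n).evalB z ν) := by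
  intro A; induction A with
  | var n => rfl
  | bot => rfl
  | and A B ihA ihB => simp [subst, evalB, ihA, ihB]
  | or A B ihA ihB => simp [subst, evalB, ihA, ihB]
  | imp A B ihA ihB => simp [subst, evalB, ihA, ihB]

lemma evalB_congr {α : Type} [GeneralizedHeytingAlgebra α] (z : α) {ν ν' : ℕ → α} :
    ∀ {A : Fml}, (∀ p ∈ A.vars, ν p = ν' p) → A.evalB z ν = A.evalB z ν' := by
  intro A; induction A with
  | var n => intro h; exact h n (by simp [vars])
  | bot => intro _; rfl
  | and A B ihA ihB =>
      intro h
      simp only [evalB]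
      rw [ihA fun p hp => h p (by simp [vars, hp]), ihB fun p hp => h p (by simp [vars, hp])]
  | or A B ihA ihB =>
      intro h
      simp only [evalB]
      rw [ihA fun p hp => h p (by simp [vars, hp]), ihB fun p hp => h p (by simp [vars, hp])]
  | imp A B ihA ihB =>
      intro h
      simp only [evalB]
      rw [ihA fun p hp => h p (by simp [vars, hp]), ihB fun p hp => h p (by simp [vars, hp])]

lemma vars_subst {σ : ℕ → Fml} {q : ℕ} :
    ∀ {A : Fml} {p : ℕ}, p ∈ A.vars → q ∈ (σ p).vars → q ∈ (A.subst σ).vars := by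
  intro A; induction A with
  | var n => intro p hp hq; simp [vars] at hp; subst hp; exact hq
  | bot => intro p hp; simp [vars] at hp
  | and A B ihA ihB =>
      intro p hp hq; simp only [vars, subst, Finset.mem_union] at hp ⊢
      rcases hp with h | h
      · exact Or.inl (ihA h hq)
      · exact Or.inr (ihB h hq)
  | or A B ihA ihB =>
      intro p hp hq; simp only [vars, subst, Finset.mem_union] at hp ⊢
      rcases hp with h | h
      · exact Or.inl (ihA h hq)
      · exact Or.inr (ihB h hq)
  | imp A B ihA ihB =>
      intro p hp hq; simp only [vars, subst, Finset.mem_union] at hp ⊢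
      rcases hp with h | h
      · exact Or.inl (ihA h hq)
      · exact Or.inr (ihB h hq)

lemma subst_id_on {ρ : ℕ → Fml} :
    ∀ {A : Fml}, (∀ p ∈ A.vars, ρ p = var p) → A.subst ρ = A := by
  intro A; induction A with
  | var n => intro h; exact h n (by simp [vars])
  | bot => intro _; rfl
  | and A B ihA ihB =>
      intro h; simp only [subst]
      rw [ihA fun p hp => h p (by simp [vars, hp]), ihB fun p hp => h p (by simp [vars, hp])]
  | or A B ihA ihB =>
      intro h; simp only [subst]
      rw [ihA fun p hp => h p (by simp [vars, hp]), ihB fun p hp => h p (by simp [vars, hp])]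
  | imp A B ihA ihB =>
      intro h; simp only [subst]
      rw [ihA fun p hp => h p (by simp [vars, hp]), ihB fun p hp => h p (by simp [vars, hp])]

lemma substBot_subst {ρ σ : ℕ → Fml} {f f' : ℕ} (hρf : ρ f = var f') :
    ∀ {A : Fml}, f ∉ A.vars → (∀ p ∈ A.vars, ρ p = (σ p).substBot (var f')) →
      (A.substBot (var f)).subst ρ = (A.subst σ).substBot (var f') := by
  intro A; induction A with
  | var n => intro _ h; exact h n (by simp [vars])
  | bot => intro _ _; simpa [substBot, subst] using hρf
  | and A B ihA ihB =>
      intro hf h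
      simp only [vars, Finset.mem_union, not_or] at hf
      simp only [substBot, subst]
      rw [ihA hf.1 fun p hp => h p (by simp [vars, hp]),
        ihB hf.2 fun p hp => h p (by simp [vars, hp])]
  | or A B ihA ihB =>
      intro hf h
      simp only [vars, Finset.mem_union, not_or] at hf
      simp only [substBot, subst]
      rw [ihA hf.1 fun p hp => h p (by simp [vars, hp]),
        ihB hf.2 fun p hp => h p (by simp [vars, hp])]
  | imp A B ihA ihB =>
      intro hf h
      simp only [vars, Finset.mem_union, not_or] at hf
      simp only [substBot, subst]
      rw [ihA hf.1 fun p hp => h p (by simp [vars, hp]),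
        ihB hf.2 fun p hp => h p (by simp [vars, hp])]

lemma below_evalB {α : Type} [GeneralizedHeytingAlgebra α] {z x : α} {ν : ℕ → α}
    (hz : x ≤ z) : ∀ {A : Fml}, (∀ p ∈ A.vars, x ≤ ν p) → x ≤ A.evalB z ν := by
  intro A; induction A with
  | var n => intro h; exact h n (by simp [vars])
  | bot => intro _; exact hz
  | and A B ihA ihB =>
      intro h
      exact le_inf (ihA fun p hp => h p (by simp [vars, hp]))
        (ihB fun p hp => h p (by simp [vars, hp]))
  | or A B ihA ihB =>
      intro h
      exact le_sup_left.trans' (ihA fun p hp => h p (by simp [vars, hp]))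
  | imp A B ihA ihB =>
      intro h
      exact le_himp_iff.2 (inf_le_left.trans (ihB fun p hp => h p (by simp [vars, hp])))

end Fml

-- Jfix: double relativization {x | g ⇨ x = x ∧ g ⇨ z ≤ x}
def Jfix {α : Type} [HeytingAlgebra α] (g z : α) : Type :=
  {x : α // g ⇨ x = x ∧ g ⇨ z ≤ x}

namespace Jfix

variable {α : Type} [HeytingAlgebra α] {g z : α}

lemma himp_mem {a b : α} (_ha : g ⇨ a = a ∧ g ⇨ z ≤ a) (hb : g ⇨ b = b ∧ g ⇨ z ≤ b) :
    g ⇨ (a ⇨ b) = a ⇨ b ∧ g ⇨ z ≤ a ⇨ b := by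
  constructor
  · rw [himp_left_comm, hb.1]
  · exact hb.2.trans le_himp

instance : Lattice (Jfix g z) where
  le a b := a.1 ≤ b.1
  le_refl a := le_refl _
  le_trans a b c := le_trans
  le_antisymm a b h h' := Subtype.ext (le_antisymm h h')
  inf a b := ⟨a.1 ⊓ b.1, by rw [himp_inf_distrib, a.2.1, b.2.1], le_inf a.2.2 b.2.2⟩
  inf_le_left a b := inf_le_left
  inf_le_right a b := inf_le_right
  le_inf a b c := le_inf
  sup a b := ⟨g ⇨ (a.1 ⊔ b.1), by rw [himp_himp, inf_idem], (a.2.2.trans le_sup_left).trans le_himp⟩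
  le_sup_left a b := le_sup_left.trans le_himp
  le_sup_right a b := le_sup_right.trans le_himp
  sup_le a b c hac hbc := by
    show g ⇨ (a.1 ⊔ b.1) ≤ c.1
    rw [← c.2.1]
    exact himp_le_himp_left (sup_le hac hbc)

instance : HeytingAlgebra (Jfix g z) where
  top := ⟨⊤, by simp⟩
  le_top a := le_top (a := a.1)
  himp a b := ⟨a.1 ⇨ b.1, himp_mem a.2 b.2⟩
  le_himp_iff a b c := le_himp_iff (a := a.1)
  bot := ⟨g ⇨ z, by rw [himp_himp, inf_idem], le_refl _⟩
  bot_le a := a.2.2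
  compl a := ⟨a.1 ⇨ (g ⇨ z), himp_mem a.2 ⟨by rw [himp_himp, inf_idem], le_refl _⟩⟩
  himp_bot a := rfl

@[simp] lemma inf_val (a b : Jfix g z) : (a ⊓ b).1 = a.1 ⊓ b.1 := rfl
@[simp] lemma sup_val (a b : Jfix g z) : (a ⊔ b).1 = g ⇨ (a.1 ⊔ b.1) := rfl
@[simp] lemma himp_val (a b : Jfix g z) : (a ⇨ b).1 = a.1 ⇨ b.1 := rfl
@[simp] lemma top_val : (⊤ : Jfix g z).1 = ⊤ := rfl
@[simp] lemma bot_val : (⊥ : Jfix g z).1 = g ⇨ z := rfl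

lemma j_inf (a b : α) : g ⇨ (a ⊓ b) = (g ⇨ a) ⊓ (g ⇨ b) := himp_inf_distrib g a b

lemma j_sup (a b : α) : g ⇨ ((g ⇨ a) ⊔ (g ⇨ b)) = g ⇨ (a ⊔ b) := by
  apply le_antisymm
  · rw [le_himp_iff, inf_comm]
    calc g ⊓ (g ⇨ ((g ⇨ a) ⊔ (g ⇨ b))) ≤ g ⊓ ((g ⇨ a) ⊔ (g ⇨ b)) :=
          le_inf inf_le_left inf_himp_le
      _ = (g ⊓ (g ⇨ a)) ⊔ (g ⊓ (g ⇨ b)) := inf_sup_left g _ _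
      _ ≤ a ⊔ b := sup_le (inf_himp_le.trans le_sup_left) (inf_himp_le.trans le_sup_right)
  · exact himp_le_himp_left (sup_le_sup le_himp le_himp)

lemma j_himp (a b : α) : (g ⇨ a) ⇨ (g ⇨ b) = g ⇨ (a ⇨ b) := by
  apply le_antisymm
  · rw [le_himp_iff, le_himp_iff]
    calc ((g ⇨ a) ⇨ (g ⇨ b)) ⊓ g ⊓ a ≤ ((g ⇨ a) ⇨ (g ⇨ b)) ⊓ (g ⇨ a) ⊓ g := by
          exact le_inf (le_inf (inf_le_left.trans inf_le_left) (inf_le_right.trans le_himp))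
            (inf_le_left.trans inf_le_right)
      _ ≤ (g ⇨ b) ⊓ g := inf_le_inf_right g himp_inf_le
      _ ≤ b := himp_inf_le
  · rw [le_himp_iff, le_himp_iff]
    calc (g ⇨ (a ⇨ b)) ⊓ (g ⇨ a) ⊓ g
        ≤ ((g ⇨ (a ⇨ b)) ⊓ g) ⊓ ((g ⇨ a) ⊓ g) := by
          exact le_inf (le_inf (inf_le_left.trans inf_le_left) inf_le_right)
            (le_inf (inf_le_left.trans inf_le_right) inf_le_right)
      _ ≤ (a ⇨ b) ⊓ a := inf_le_inf himp_inf_le himp_inf_le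
      _ ≤ b := himp_inf_le

end Jfix

-- Guards
def guardList (f : ℕ) : List ℕ → Fml
  | [] => Fml.imp (Fml.var f) (Fml.var f)
  | n :: l => Fml.and (Fml.imp (Fml.var f) (Fml.var n)) (guardList f l)

lemma guardList_pos (f : ℕ) : ∀ l : List ℕ, (guardList f l).Positive
  | [] => ⟨trivial, trivial⟩
  | _ :: l => ⟨⟨trivial, trivial⟩, guardList_pos f l⟩

lemma guard_le {α : Type} [GeneralizedHeytingAlgebra α] (z : α) (ν : ℕ → α) (f : ℕ) :
    ∀ {l : List ℕ} {p : ℕ}, p ∈ l → (guardList f l).evalB z ν ≤ ν f ⇨ ν p := by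
  intro l
  induction l with
  | nil => intro p hp; simp at hp
  | cons n l ih =>
    intro p hp
    simp only [guardList, Fml.evalB]
    rcases List.mem_cons.1 hp with h | h
    · subst h; exact inf_le_left
    · exact inf_le_right.trans (ih h)

lemma le_guard {α : Type} [GeneralizedHeytingAlgebra α] (z : α) (ν : ℕ → α) (f : ℕ) {x : α} :
    ∀ {l : List ℕ}, (∀ p ∈ l, x ≤ ν f ⇨ ν p) → x ≤ (guardList f l).evalB z ν := by
  intro l
  induction l with
  | nil => intro _; simp [guardList, Fml.evalB]
  | cons n l ih =>
    intro h
    simp only [guardList, Fml.evalB]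
    exact le_inf (h n List.mem_cons_self) (ih fun p hp => h p (List.mem_cons_of_mem n hp))

lemma conjList_pos : ∀ l : List ℕ, (conjList l).Positive
  | [] => ⟨trivial, trivial⟩
  | [_] => trivial
  | _ :: m :: l => ⟨trivial, conjList_pos (m :: l)⟩

lemma conjList_le {α : Type} [GeneralizedHeytingAlgebra α] (z : α) (ν : ℕ → α) :
    ∀ {l : List ℕ} {p : ℕ}, p ∈ l → (conjList l).evalB z ν ≤ ν p := by
  intro l
  induction l with
  | nil => intro p hp; simp at hp
  | cons n l ih =>
    intro p hp
    cases l with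
    | nil =>
      rcases List.mem_cons.1 hp with h | h
      · subst h; exact le_refl _
      · simp at h
    | cons m l' =>
      show (Fml.and (Fml.var n) (conjList (m :: l'))).evalB z ν ≤ ν p
      rcases List.mem_cons.1 hp with h | h
      · subst h; exact inf_le_left
      · exact inf_le_right.trans (ih h)

lemma fresh_not_mem (s : Finset ℕ) : s.sup id + 1 ∉ s := by
  intro h
  have := Finset.le_sup (f := id) h
  simp only [id] at this
  omega

-- Key lemma
lemma key_lemma {α : Type} [HeytingAlgebra α] {A : Fml} (hA : A ∈ IntL) (g z : α) (ν : ℕ → α)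
    (h : ∀ p ∈ A.vars, g ⊓ z ≤ ν p) : g ≤ A.evalB z ν := by
  set ν' : ℕ → Jfix g z := fun n =>
    ⟨g ⇨ (ν n ⊔ (g ⇨ z)), by rw [himp_himp, inf_idem], le_sup_right.trans le_himp⟩ with hν'
  have transfer : ∀ B : Fml, (∀ p ∈ B.vars, (ν' p).1 = g ⇨ ν p) →
      (Fml.eval ν' B).1 = g ⇨ B.evalB z ν := by
    intro B
    induction B with
    | var n => intro h; exact h n (by simp [Fml.vars])
    | bot => intro _; rfl
    | and A B ihA ihB =>
      intro h
      show (Fml.eval ν' A ⊓ Fml.eval ν' B).1 = _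
      rw [Jfix.inf_val, ihA fun p hp => h p (by simp [Fml.vars, hp]),
        ihB fun p hp => h p (by simp [Fml.vars, hp])]
      exact (Jfix.j_inf _ _).symm
    | or A B ihA ihB =>
      intro h
      show (Fml.eval ν' A ⊔ Fml.eval ν' B).1 = _
      rw [Jfix.sup_val, ihA fun p hp => h p (by simp [Fml.vars, hp]),
        ihB fun p hp => h p (by simp [Fml.vars, hp])]
      exact Jfix.j_sup _ _
    | imp A B ihA ihB =>
      intro h
      show (Fml.eval ν' A ⇨ Fml.eval ν' B).1 = _
      rw [Jfix.himp_val, ihA fun p hp => h p (by simp [Fml.vars, hp]),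
        ihB fun p hp => h p (by simp [Fml.vars, hp])]
      exact Jfix.j_himp _ _
  have hvars : ∀ p ∈ A.vars, (ν' p).1 = g ⇨ ν p := by
    intro p hp
    show g ⇨ (ν p ⊔ (g ⇨ z)) = g ⇨ ν p
    have hz : (g ⇨ z) ≤ g ⇨ ν p := by
      apply le_himp_iff.2
      calc (g ⇨ z) ⊓ g ≤ z ⊓ g := le_inf himp_inf_le inf_le_right
        _ ≤ ν p := by rw [inf_comm]; exact h p hp
    apply le_antisymm
    · calc g ⇨ (ν p ⊔ (g ⇨ z)) ≤ g ⇨ (g ⇨ ν p) :=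
            himp_le_himp_left (sup_le le_himp hz)
        _ = g ⇨ ν p := by rw [himp_himp, inf_idem]
    · exact himp_le_himp_left le_sup_left
  have hvalid : Fml.eval ν' A = ⊤ := hA (Jfix g z) ν'
  have heq : (Fml.eval ν' A).1 = (⊤ : Jfix g z).1 := congrArg Subtype.val hvalid
  rw [transfer A hvars, Jfix.top_val] at heq
  exact himp_eq_top_iff.1 heq

/-- The auxiliary superintuitionistic logic built from a positive logic `P`. -/
def Lc (P : Set Fml) : Set Fml :=
  {A | ∀ f : ℕ, f ∉ A.vars →
    Fml.imp (guardList f A.vars.toList) (A.substBot (Fml.var f)) ∈ P}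

section Lc

variable {P : Set Fml}

lemma substBotVar_pos (f : ℕ) (A : Fml) : (A.substBot (Fml.var f)).Positive :=
  Fml.substBot_positive (C := Fml.var f) trivial A

/-- transitivity derivation inside P -/
lemma P_trans (hP : IsPosLogic P) {G G' B : Fml}
    (hG : G.Positive) (hG' : G'.Positive) (hB : B.Positive)
    (h1 : Fml.imp G G' ∈ P) (h2 : Fml.imp G' B ∈ P) : Fml.imp G B ∈ P := by
  have T : Fml.imp (Fml.imp G G') (Fml.imp (Fml.imp G' B) (Fml.imp G B)) ∈ IntLPos := by
    refine ⟨fun α _ ν => ?_, ⟨⟨hG, hG'⟩, ⟨⟨hG', hB⟩, ⟨hG, hB⟩⟩⟩⟩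
    simp only [Fml.eval, Fml.evalB]
    rw [himp_eq_top_iff, le_himp_iff, le_himp_iff]
    set g := G.evalB (⊥ : α) ν
    set g' := G'.evalB (⊥ : α) ν
    set b := B.evalB (⊥ : α) ν
    have t1 : ((g ⇨ g') ⊓ (g' ⇨ b)) ⊓ g ≤ g' :=
      (inf_le_inf_right g inf_le_left).trans himp_inf_le
    exact (le_inf (inf_le_left.trans inf_le_right) t1).trans himp_inf_le
  exact hP.mp _ _ (hP.mp _ _ (hP.int_sub T) h1) h2

lemma int_sub_Lc (hP : IsPosLogic P) : IntL ⊆ Lc P := by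
  intro A hA f hf
  apply hP.int_sub
  refine ⟨fun α _ ν => ?_, ⟨guardList_pos f _, substBotVar_pos _ A⟩⟩
  simp only [Fml.eval, Fml.evalB]
  rw [Fml.evalB_substBot, himp_eq_top_iff]
  show (guardList f A.vars.toList).evalB ⊥ ν ≤ A.evalB ((Fml.var f).evalB ⊥ ν) ν
  apply key_lemma hA
  intro p hp
  exact le_himp_iff.1 (guard_le ⊥ ν f (Finset.mem_toList.2 hp))

lemma mp_Lc (hP : IsPosLogic P) : ∀ A B : Fml, Fml.imp A B ∈ Lc P → A ∈ Lc P → B ∈ Lc P := by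
  intro A B hAB hA f hf
  set U : Finset ℕ := A.vars ∪ B.vars with hU
  set f' : ℕ := (U ∪ {f}).sup id + 1 with hf'
  have hf'U : f' ∉ U ∪ {f} := fresh_not_mem _
  have hf'A : f' ∉ A.vars := fun h => hf'U (by simp [hU, h])
  have hf'B : f' ∉ B.vars := fun h => hf'U (by simp [hU, h])
  have hf'f : f' ≠ f := fun h => hf'U (by simp [h])
  have hX : Fml.imp (guardList f' U.toList)
      (Fml.imp (A.substBot (Fml.var f')) (B.substBot (Fml.var f'))) ∈ P := by
    have := hAB f' (by simpa [Fml.vars, hU] using (fun h => hf'U (by simp [h]) : f' ∉ U))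
    simpa [Fml.vars, Fml.substBot, hU] using this
  have hY : Fml.imp (guardList f' A.vars.toList) (A.substBot (Fml.var f')) ∈ P := hA f' hf'A
  -- combine: Z₀ := guard(U) → B*
  have hguard_mono : ∀ (α : Type) [HeytingAlgebra α] (ν : ℕ → α),
      (guardList f' U.toList).evalB ⊥ ν ≤ (guardList f' A.vars.toList).evalB ⊥ ν := by
    intro α _ ν
    apply le_guard
    intro p hp
    exact guard_le ⊥ ν f' (Finset.mem_toList.2 (by
      simp only [hU, Finset.mem_union]; exact Or.inl (Finset.mem_toList.1 hp)))
  have hZ0 : Fml.imp (guardList f' U.toList) (B.substBot (Fml.var f')) ∈ P := by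
    have W : Fml.imp (Fml.imp (guardList f' U.toList)
        (Fml.imp (A.substBot (Fml.var f')) (B.substBot (Fml.var f'))))
        (Fml.imp (Fml.imp (guardList f' A.vars.toList) (A.substBot (Fml.var f')))
          (Fml.imp (guardList f' U.toList) (B.substBot (Fml.var f')))) ∈ IntLPos := by
      constructor
      · intro α _ ν
        simp only [Fml.eval, Fml.evalB]
        rw [himp_eq_top_iff, le_himp_iff, le_himp_iff]
        set gU := (guardList f' U.toList).evalB (⊥ : α) ν
        set gA := (guardList f' A.vars.toList).evalB (⊥ : α) ν
        set a' := (A.substBot (Fml.var f')).evalB (⊥ : α) ν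
        set b' := (B.substBot (Fml.var f')).evalB (⊥ : α) ν
        have hGA : gU ≤ gA := hguard_mono α ν
        have t1 : ((gU ⇨ (a' ⇨ b')) ⊓ (gA ⇨ a')) ⊓ gU ≤ a' ⇨ b' :=
          (le_inf (inf_le_left.trans inf_le_left) inf_le_right).trans himp_inf_le
        have t2 : ((gU ⇨ (a' ⇨ b')) ⊓ (gA ⇨ a')) ⊓ gU ≤ a' :=
          (le_inf (inf_le_left.trans inf_le_right) (inf_le_right.trans hGA)).trans himp_inf_le
        exact (le_inf t1 t2).trans himp_inf_le
      · exact ⟨⟨guardList_pos _ _, ⟨substBotVar_pos _ A, substBotVar_pos _ B⟩⟩,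
          ⟨⟨guardList_pos _ _, substBotVar_pos _ A⟩,
            ⟨guardList_pos _ _, substBotVar_pos _ B⟩⟩⟩
    exact hP.mp _ _ (hP.mp _ _ (hP.int_sub W) hX) hY
  -- substitute to rename f' to f and kill variables outside B
  set ρ : ℕ → Fml := fun n =>
    if n = f' then Fml.var f else if n ∈ B.vars then Fml.var n else Fml.var f with hρ
  have hρpos : PosSubst ρ := by
    intro n; simp only [hρ]
    split
    · trivial
    · split <;> trivial
  have hZ1 := hP.subst_closed _ hZ0 ρ hρpos
  have hBsub : (B.substBot (Fml.var f')).subst ρ = B.substBot (Fml.var f) := by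
    have hrw := Fml.substBot_subst (ρ := ρ) (σ := Fml.var) (f := f') (f' := f)
      (by simp [hρ]) hf'B (A := B) ?_
    · rw [hrw, Fml.subst_id_on (fun p _ => rfl)]
    · intro p hp
      have hpf' : p ≠ f' := by rintro rfl; exact hf'B hp
      simp only [hρ, if_neg hpf', if_pos hp]
      rfl
  have hZ1' : Fml.imp ((guardList f' U.toList).subst ρ) (B.substBot (Fml.var f)) ∈ P := by
    simpa [Fml.subst, hBsub] using hZ1
  -- guard(B, f) implies ρ(guard(U, f'))
  have hV : Fml.imp (guardList f B.vars.toList) ((guardList f' U.toList).subst ρ) ∈ IntLPos := by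
    constructor
    · intro α _ ν
      simp only [Fml.eval, Fml.evalB]
      rw [himp_eq_top_iff, Fml.evalB_subst]
      apply le_guard
      intro p hp
      have hpU : p ∈ U := Finset.mem_toList.1 hp
      have hpf' : p ≠ f' := fun h => hf'U (by simp [h ▸ hpU])
      simp only [hρ, if_pos rfl, if_neg hpf']
      by_cases hpB : p ∈ B.vars
      · simp only [if_pos hpB, Fml.evalB]
        exact guard_le ⊥ ν f (Finset.mem_toList.2 hpB)
      · simp only [if_neg hpB, Fml.evalB]
        exact le_top.trans (le_of_eq himp_self.symm)
    · exact ⟨guardList_pos _ _, Fml.subst_positive hρpos (guardList_pos _ _)⟩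
  exact P_trans hP (guardList_pos _ _) (Fml.subst_positive hρpos (guardList_pos _ _))
    (substBotVar_pos _ B) (hP.int_sub hV) hZ1'


lemma subst_Lc (hP : IsPosLogic P) : ∀ A ∈ Lc P, ∀ σ : ℕ → Fml, A.subst σ ∈ Lc P := by
  intro A hA σ f hf
  set f₀ := A.vars.sup id + 1 with hf₀
  have hf₀A : f₀ ∉ A.vars := fresh_not_mem _
  have hY := hA f₀ hf₀A
  set ρ : ℕ → Fml := fun n => if n = f₀ then Fml.var f else (σ n).substBot (Fml.var f) with hρ
  have hρpos : PosSubst ρ := by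
    intro n; simp only [hρ]; split
    · trivial
    · exact Fml.substBot_positive (C := Fml.var f) trivial _
  have hZ1 := hP.subst_closed _ hY ρ hρpos
  have hAsub : (A.substBot (Fml.var f₀)).subst ρ = (A.subst σ).substBot (Fml.var f) := by
    apply Fml.substBot_subst (σ := σ) (by simp [hρ]) hf₀A
    intro p hp
    have hpf : p ≠ f₀ := by rintro rfl; exact hf₀A hp
    simp [hρ, if_neg hpf]
  have hZ1' : Fml.imp ((guardList f₀ A.vars.toList).subst ρ)
      ((A.subst σ).substBot (Fml.var f)) ∈ P := by
    simpa [Fml.subst, hAsub] using hZ1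
  have hV : Fml.imp (guardList f (A.subst σ).vars.toList)
      ((guardList f₀ A.vars.toList).subst ρ) ∈ IntLPos := by
    constructor
    · intro α _ ν
      simp only [Fml.eval, Fml.evalB]
      rw [himp_eq_top_iff, Fml.evalB_subst]
      apply le_guard
      intro p hp
      have hpA : p ∈ A.vars := Finset.mem_toList.1 hp
      have hpf₀ : p ≠ f₀ := by rintro rfl; exact hf₀A hpA
      simp only [hρ, if_pos rfl, if_neg hpf₀]
      rw [Fml.evalB_substBot]
      rw [le_himp_iff]
      apply Fml.below_evalB inf_le_right
      intro q hq
      have hq' : q ∈ (A.subst σ).vars := Fml.vars_subst hpA hq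
      exact le_himp_iff.1 (guard_le ⊥ ν f (Finset.mem_toList.2 hq'))
    · exact ⟨guardList_pos _ _, Fml.subst_positive hρpos (guardList_pos _ _)⟩
  exact P_trans hP (guardList_pos _ _) (Fml.subst_positive hρpos (guardList_pos _ _))
    (substBotVar_pos _ _) (hP.int_sub hV) hZ1'

lemma P_sub_Lc (hP : IsPosLogic P) : P ⊆ Lc P := by
  intro A hA f hf
  have hApos : A.Positive := hP.pos hA
  rw [Fml.positive_substBot hApos]
  have T : Fml.imp A (Fml.imp (guardList f A.vars.toList) A) ∈ IntLPos := by
    refine ⟨fun α _ ν => ?_, ⟨hApos, ⟨guardList_pos _ _, hApos⟩⟩⟩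
    simp only [Fml.eval, Fml.evalB]
    rw [himp_eq_top_iff]
    exact le_himp
  exact hP.mp _ _ (hP.int_sub T) hA

lemma Lc_pos_sub (hP : IsPosLogic P) : Lc P ∩ PosFml ⊆ P := by
  rintro A ⟨hA, hApos⟩
  set f := A.vars.sup id + 1 with hfdef
  have hf : f ∉ A.vars := fresh_not_mem _
  have hH := hA f hf
  rw [Fml.positive_substBot hApos] at hH
  set ρ : ℕ → Fml := fun n => if n = f then conjOf A.vars else Fml.var n with hρ
  have hρpos : PosSubst ρ := by
    intro n; simp only [hρ]; split
    · exact conjList_pos _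
    · trivial
  have hH2 := hP.subst_closed _ hH ρ hρpos
  have hAid : A.subst ρ = A := Fml.subst_id_on (fun p hp => by
    have hpf : p ≠ f := by rintro rfl; exact hf hp
    simp [hρ, if_neg hpf])
  have hH3 : Fml.imp ((guardList f A.vars.toList).subst ρ) A ∈ P := by
    simpa [Fml.subst, hAid] using hH2
  have hG : (guardList f A.vars.toList).subst ρ ∈ IntLPos := by
    constructor
    · intro α _ ν
      rw [Fml.eval, Fml.evalB_subst, ← top_le_iff]
      apply le_guard
      intro p hp
      have hpA : p ∈ A.vars := Finset.mem_toList.1 hp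
      have hpf : p ≠ f := by rintro rfl; exact hf hpA
      simp only [hρ, if_pos rfl, if_neg hpf]
      rw [top_le_iff, himp_eq_top_iff]
      exact conjList_le ⊥ ν ((Finset.mem_sort _).2 hpA)
    · exact Fml.subst_positive hρpos (guardList_pos _ _)
  exact hP.mp _ _ hH3 (hP.int_sub hG)

end Lc


/-- every positive logic P is the positive fragment of Int + P, and
Int + P is the least superintuitionistic logic with positive fragment P. -/
theorem stmt6 (P : Set Fml) (hP : IsPosLogic P) :
    P = IntPlus P ∩ PosFml ∧
    ∀ L : Set Fml, IsSILogic L → L ∩ PosFml = P → IntPlus P ⊆ L := by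
  have hSI : IsSILogic (Lc P) := ⟨int_sub_Lc hP, mp_Lc hP, subst_Lc hP⟩
  have hmem : Lc P ∈ {L | IsSILogic L ∧ P ⊆ L} := ⟨hSI, P_sub_Lc hP⟩
  constructor
  · apply Set.Subset.antisymm
    · intro A hA
      exact ⟨Set.mem_sInter.2 fun L' hL' => hL'.2 hA, hP.pos hA⟩
    · intro A hA
      exact Lc_pos_sub hP ⟨Set.mem_sInter.1 hA.1 (Lc P) hmem, hA.2⟩
  · intro L hL hLP A hA
    refine Set.mem_sInter.1 hA L ⟨hL, ?_⟩
    intro B hB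
    rw [← hLP] at hB
    exact hB.1
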